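/- arXiv:2301.08543 — 2 statements merged into one kernel-verified Lean document; each statement's English description precedes it below -/
import Mathlib

section
/- Let g : ℝ² → ℝ² be a C¹ map with g(0) = 0 whose Jacobian A at 0 has eigenvalues 0 and λ with |λ| ≥ 1. Let B = {e₀, e_λ} be a basis of eigenvectors, ‖·‖ the ℓ¹-norm in these coordinates, and for α > 0 let C(α) = {u = (u₀, u_λ)_B ≠ 0 : |u₀| < α|u_λ|}. Then for every ε ∈ (0, 1/2) there exists δ > 0 such that for all u with 0 < ‖u‖ < δ: (i) if u ∉ C((|λ|+2ε−1)/(1−2ε)) then ‖g(u)‖ < (1−ε)‖u‖; and (ii) if u ∈ C((|λ|−3ε)/(3ε)) then |(g(u))_λ| > ε‖u‖, so in particular g(u) does not lie in the span of e₀. -/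
/-- Lemma 4.3 of the paper: local analysis of a planar `C¹` map whose Jacobian at the
fixed point `0` has eigenvalues `0` and `λ` with `|λ| ≥ 1`.  Coordinates `(c₀ u, c₁ u)`
are taken with respect to the eigenbasis `{e₀, e_λ}`, and the `ℓ¹`-norm of `u` is
`|c₀ u| + |c₁ u|`.  The cone `C(α)` is `{u ≠ 0 : |c₀ u| < α |c₁ u|}`. -/
theorem stmt2 (g : (Fin 2 → ℝ) → (Fin 2 → ℝ)) (hg : ContDiff ℝ 1 g) (h0 : g 0 = 0)
    (lam : ℝ) (hlam : 1 ≤ |lam|) (e0 el : Fin 2 → ℝ)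
    (hli : LinearIndependent ℝ ![e0, el])
    (he0 : fderiv ℝ g 0 e0 = 0) (hel : fderiv ℝ g 0 el = lam • el)
    (c0 c1 : (Fin 2 → ℝ) → ℝ) (hcoord : ∀ u, u = c0 u • e0 + c1 u • el) :
    ∀ ε : ℝ, 0 < ε → ε < 1 / 2 → ∃ δ > 0, ∀ u : Fin 2 → ℝ,
      0 < |c0 u| + |c1 u| → |c0 u| + |c1 u| < δ →
      (¬ (|c0 u| < (|lam| + 2 * ε - 1) / (1 - 2 * ε) * |c1 u|) →
          |c0 (g u)| + |c1 (g u)| < (1 - ε) * (|c0 u| + |c1 u|)) ∧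
      (|c0 u| < (|lam| - 3 * ε) / (3 * ε) * |c1 u| →
          ε * (|c0 u| + |c1 u|) < |c1 (g u)| ∧ g u ∉ Submodule.span ℝ {e0}) := by
  intro ε hε hε2
  -- uniqueness of coordinates
  have uniq : ∀ a b a' b' : ℝ, a • e0 + b • el = a' • e0 + b' • el → a = a' ∧ b = b' := by
    intro a b a' b' h
    have h2 : (a - a') • e0 + (b - b') • el = 0 := by
      rw [sub_smul, sub_smul,
        show a • e0 - a' • e0 + (b • el - b' • el)
          = (a • e0 + b • el) - (a' • e0 + b' • el) by abel, h, sub_self]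
    obtain ⟨h3, h4⟩ := LinearIndependent.pair_iff.mp hli _ _ h2
    exact ⟨by linarith [sub_eq_zero.mp (by linarith : a - a' = 0)], sub_eq_zero.mp h4⟩
  -- linearity of coordinates
  have hadd : ∀ u v, c0 (u + v) = c0 u + c0 v ∧ c1 (u + v) = c1 u + c1 v := by
    intro u v
    refine uniq _ _ _ _ ?_
    rw [← hcoord (u + v)]
    rw [show (c0 u + c0 v) • e0 + (c1 u + c1 v) • el
        = (c0 u • e0 + c1 u • el) + (c0 v • e0 + c1 v • el) by module,
      ← hcoord u, ← hcoord v]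
  have hsmul : ∀ (t : ℝ) u, c0 (t • u) = t * c0 u ∧ c1 (t • u) = t * c1 u := by
    intro t u
    refine uniq _ _ _ _ ?_
    rw [← hcoord (t • u)]
    rw [show (t * c0 u) • e0 + (t * c1 u) • el = t • (c0 u • e0 + c1 u • el) by module,
      ← hcoord u]
  obtain ⟨K, hKpos, hKbound⟩ : ∃ K : ℝ, 0 < K ∧ ∀ x, |c0 x| + |c1 x| ≤ K * ‖x‖ := by
    let C0 : (Fin 2 → ℝ) →ₗ[ℝ] ℝ :=
      { toFun := c0, map_add' := fun u v => (hadd u v).1,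
        map_smul' := fun t u => (hsmul t u).1 }
    let C1 : (Fin 2 → ℝ) →ₗ[ℝ] ℝ :=
      { toFun := c1, map_add' := fun u v => (hadd u v).2,
        map_smul' := fun t u => (hsmul t u).2 }
    refine ⟨‖LinearMap.toContinuousLinearMap C0‖ + ‖LinearMap.toContinuousLinearMap C1‖ + 1,
      ?_, ?_⟩
    · have := norm_nonneg (LinearMap.toContinuousLinearMap C0)
      have := norm_nonneg (LinearMap.toContinuousLinearMap C1)
      positivity
    · intro x
      have h1 := (LinearMap.toContinuousLinearMap C0).le_opNorm x
      have h2 := (LinearMap.toContinuousLinearMap C1).le_opNorm x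
      simp only [LinearMap.coe_toContinuousLinearMap', C0, C1, LinearMap.coe_mk,
        AddHom.coe_mk, Real.norm_eq_abs] at h1 h2
      have := norm_nonneg x
      nlinarith
  set M : ℝ := ‖e0‖ + ‖el‖ + 1 with hM
  have hMpos : 0 < M := by
    have := norm_nonneg e0; have := norm_nonneg el; positivity
  clear_value M
  have hMbound : ∀ u : Fin 2 → ℝ, ‖u‖ ≤ M * (|c0 u| + |c1 u|) := by
    intro u
    calc ‖u‖ = ‖c0 u • e0 + c1 u • el‖ := by rw [← hcoord u]
    _ ≤ ‖c0 u • e0‖ + ‖c1 u • el‖ := norm_add_le _ _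
    _ = |c0 u| * ‖e0‖ + |c1 u| * ‖el‖ := by
        rw [norm_smul, norm_smul, Real.norm_eq_abs, Real.norm_eq_abs]
    _ ≤ M * (|c0 u| + |c1 u|) := by
        have := abs_nonneg (c0 u); have := abs_nonneg (c1 u)
        have := norm_nonneg e0; have := norm_nonneg el
        nlinarith [hM.ge, hM.le]
  -- the derivative
  set A := fderiv ℝ g 0 with hA
  have hdiff : HasFDerivAt g A 0 :=
    ((hg.differentiable one_ne_zero) 0).hasFDerivAt
  clear hA
  clear_value A
  have hlo : (fun u => g u - A u) =o[nhds 0] fun u : Fin 2 → ℝ => u := by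
    have := hdiff.isLittleO
    simpa [h0] using this
  have hc : (0 : ℝ) < ε / (2 * K * M) := by positivity
  have hev := hlo.def hc
  rw [Metric.eventually_nhds_iff] at hev
  obtain ⟨δ', hδ'pos, hδ'⟩ := hev
  refine ⟨δ' / M, by positivity, ?_⟩
  intro u hNpos hNδ
  set Nu : ℝ := |c0 u| + |c1 u| with hNu
  -- the remainder bound
  have hunorm : ‖u‖ < δ' := by
    calc ‖u‖ ≤ M * Nu := hMbound u
    _ < M * (δ' / M) := by exact (mul_lt_mul_iff_right₀ hMpos).mpr hNδ
    _ = δ' := by field_simp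
  have hrem : ‖g u - A u‖ ≤ ε / (2 * K * M) * ‖u‖ := by
    have := hδ' (y := u) (by simpa using hunorm)
    simpa using this
  have hNr : |c0 (g u - A u)| + |c1 (g u - A u)| ≤ ε / 2 * Nu := by
    calc |c0 (g u - A u)| + |c1 (g u - A u)| ≤ K * ‖g u - A u‖ := hKbound _
    _ ≤ K * (ε / (2 * K * M) * ‖u‖) := by
        exact mul_le_mul_of_nonneg_left hrem hKpos.le
    _ ≤ K * (ε / (2 * K * M) * (M * Nu)) := by
        refine mul_le_mul_of_nonneg_left (mul_le_mul_of_nonneg_left (hMbound u) hc.le) hKpos.le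
    _ = ε / 2 * Nu := by
        field_simp
  -- coordinates of A u
  have hAu : ∀ v : Fin 2 → ℝ, A v = (lam * c1 v) • el := by
    intro v
    conv_lhs => rw [hcoord v]
    rw [map_add, map_smul, map_smul, he0, hel, smul_zero, zero_add, smul_smul,
      mul_comm (c1 v) lam]
  have hcAu : c0 (A u) = 0 ∧ c1 (A u) = lam * c1 u := by
    refine uniq _ _ _ _ ?_
    rw [← hcoord (A u), hAu u, zero_smul, zero_add]
  -- coordinates of g u
  have hsum : A u + (g u - A u) = g u := by abel
  have hgu : c0 (g u) = c0 (g u - A u) ∧ c1 (g u) = lam * c1 u + c1 (g u - A u) := by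
    constructor
    · have h2 := (hadd (A u) (g u - A u)).1
      rw [hsum] at h2
      rw [h2, hcAu.1, zero_add]
    · have h2 := (hadd (A u) (g u - A u)).2
      rw [hsum] at h2
      rw [h2, hcAu.2]
  have habs0 : |c0 (g u)| ≤ |c0 (g u - A u)| := le_of_eq (by rw [hgu.1])
  clear_value Nu
  clear hlo hδ' hdiff hg hrem hunorm hKbound hMbound hAu hcAu hsum hc hNδ h0 he0 hel
  constructor
  · -- part (i)
    intro hnot
    push_neg at hnot
    have h12 : (0:ℝ) < 1 - 2 * ε := by linarith
    have hkey : (|lam| + 2 * ε - 1) * |c1 u| ≤ (1 - 2 * ε) * |c0 u| := by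
      rw [div_mul_eq_mul_div, div_le_iff₀ h12] at hnot
      linarith
    have hlc1 : |lam| * |c1 u| ≤ (1 - 2 * ε) * Nu := by
      rw [hNu]; nlinarith [abs_nonneg (c1 u)]
    have h1 : |c1 (g u)| ≤ |lam| * |c1 u| + |c1 (g u - A u)| := by
      rw [hgu.2]
      calc |lam * c1 u + c1 (g u - A u)| ≤ |lam * c1 u| + |c1 (g u - A u)| := abs_add_le _ _
      _ = |lam| * |c1 u| + |c1 (g u - A u)| := by rw [abs_mul]
    nlinarith [abs_nonneg (c0 (g u - A u))]
  · -- part (ii)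
    intro hin
    have h3ε : (0:ℝ) < 3 * ε := by linarith
    have hkey : |c0 u| * (3 * ε) < (|lam| - 3 * ε) * |c1 u| := by
      rw [div_mul_eq_mul_div, lt_div_iff₀ h3ε] at hin
      exact hin
    have hlc1 : 3 * ε * Nu < |lam| * |c1 u| := by rw [hNu]; nlinarith
    have h1 : |lam| * |c1 u| - |c1 (g u - A u)| ≤ |c1 (g u)| := by
      rw [hgu.2]
      have := abs_sub_abs_le_abs_sub (lam * c1 u) (-(c1 (g u - A u)))
      rw [abs_neg, sub_neg_eq_add, abs_mul] at this
      linarith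
    have hmain : ε * Nu < |c1 (g u)| := by
      nlinarith [abs_nonneg (c0 (g u - A u))]
    refine ⟨hmain, ?_⟩
    intro hmem
    obtain ⟨t, ht⟩ := Submodule.mem_span_singleton.mp hmem
    have : c0 (g u) = t ∧ c1 (g u) = 0 := by
      refine uniq _ _ _ _ ?_
      rw [← hcoord (g u), ← ht, zero_smul, add_zero]
    rw [this.2] at hmain
    simp only [abs_zero] at hmain
    nlinarith
end

section
/- Let F, G : ℝ × D → ℝ × D be continuous maps (D a topological space) that are lifts of the same map of S¹ × D of degree d in the ℝ-factor, i.e. F(x+1, y) = τ^d F(x, y) and G = τᵐ ∘ F where τ(x,y) = (x+1, y) and m ∈ ℤ. If there exist fixed points (x, y) of F and (x′, y′) of G with x − x′ ∈ ℤ and y = y′, then d ≠ 1 implies (d − 1) divides m. -/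
/-- Nielsen lemma in the product model `ℝ × D` covering `S¹ × D` (Lemma 2.1 of the
paper).  `F` is a lift of transversal degree `d` (`F ∘ τ = τ^d ∘ F` with `τ` the unit
translation in the `ℝ`-factor) and `G = τᵐ ∘ F`.  If `F` and `G` have fixed points
projecting to the same point of `S¹ × D`, then `d ≠ 1` implies `(d − 1) ∣ m`. -/
theorem stmt17 (D : Type*) [TopologicalSpace D]
    (F G : ℝ × D → ℝ × D) (hF : Continuous F) (hG : Continuous G)
    (d m : ℤ)
    (hFd : ∀ p : ℝ × D, F (p.1 + 1, p.2) = ((F p).1 + d, (F p).2))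
    (hGF : ∀ p : ℝ × D, G p = ((F p).1 + m, (F p).2))
    (x x' : ℝ) (y y' : D)
    (hx : F (x, y) = (x, y)) (hx' : G (x', y') = (x', y'))
    (hproj : (∃ k : ℤ, x - x' = (k : ℝ)) ∧ y = y')
    (hd : d ≠ 1) :
    (d - 1) ∣ m := by
  obtain ⟨⟨k, hk⟩, hy⟩ := hproj
  subst hy
  have key : ∀ n : ℤ, F (x + n, y) = ((F (x, y)).1 + n * d, (F (x, y)).2) := by
    intro n
    induction n using Int.induction_on with
    | zero => simp
    | succ i ih =>
        have h := hFd (x + (i : ℝ), y)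
        simp only at h
        have ih1 := congrArg Prod.fst ih
        have ih2 := congrArg Prod.snd ih
        simp only at ih1 ih2
        push_cast at ih1 ih2
        have e : (x + ((i : ℤ) + 1 : ℤ) : ℝ) = x + (i : ℝ) + 1 := by push_cast; ring
        refine Prod.ext ?_ ?_
        · show (F (x + (((i : ℤ) + 1 : ℤ) : ℝ), y)).1 = (F (x, y)).1 + (((i : ℤ) + 1 : ℤ) : ℝ) * d
          rw [e, h]
          push_cast
          have : ((i : ℝ) + 1) * d = (i : ℝ) * d + d := by ring
          rw [this]; linarith
        · show (F (x + (((i : ℤ) + 1 : ℤ) : ℝ), y)).2 = (F (x, y)).2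
          rw [e, h]; exact ih2
    | pred i ih =>
        have h := hFd (x + (-(i : ℝ) - 1), y)
        simp only at h
        rw [show x + (-(i : ℝ) - 1) + 1 = x + ((-(i : ℤ) : ℤ) : ℝ) by push_cast; ring,
          ih] at h
        have h1 := congrArg Prod.fst h
        have h2 := congrArg Prod.snd h
        simp only at h1 h2
        push_cast at h1 h2
        have e : (x + ((-(i : ℤ) - 1 : ℤ)) : ℝ) = x + (-(i : ℝ) - 1) := by push_cast; ring
        refine Prod.ext ?_ ?_
        · show (F (x + (((-(i : ℤ) - 1 : ℤ)) : ℝ), y)).1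
            = (F (x, y)).1 + (((-(i : ℤ) - 1 : ℤ)) : ℝ) * d
          rw [e]
          push_cast
          have : (-(i : ℝ) - 1) * d = -(i : ℝ) * d - d := by ring
          rw [this]; linarith
        · show (F (x + (((-(i : ℤ) - 1 : ℤ)) : ℝ), y)).2 = (F (x, y)).2
          rw [e]; exact h2.symm
  have hx'eq : x' = x + ((-k : ℤ) : ℝ) := by push_cast; linarith [hk]
  have hFx' : F (x', y) = (x - k * d, y) := by
    rw [hx'eq, key (-k), hx]
    push_cast; ring_nf
  have h := hGF (x', y)
  rw [hx', hFx'] at h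
  have h1 : x' = x - k * d + m := by
    have := congrArg Prod.fst h
    simpa using this
  have hr : (k : ℝ) * ((d : ℝ) - 1) = m := by
    rw [hx'eq] at h1; push_cast at h1 ⊢; linarith
  have hzm : k * (d - 1) = m := by exact_mod_cast hr
  exact ⟨k, by rw [← hzm]; ring⟩
end
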